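/- For every complex number q with |q| < 1, Σ_{n=0}^∞ q^{n²} / (∏_{k=1}^n (1 + q^k))² = 1 − Σ_{n=1}^∞ (−1)^n q^n / ∏_{k=1}^n (1 + q^k), both series converging absolutely. Equivalently, Ramanujan's order-three mock theta function f(q) = Σ_{n≥0} q^{n²}/(−q;q)_n² equals 1 − Σ_{n≥1}(−1)^n q^n/(−q;q)_n. -/

import Mathlib

open Filter Topology

namespace MockF

noncomputable def P (q : ℂ) (n : ℕ) : ℂ := ∏ k ∈ Finset.range n, (1 + q ^ (k + 1))

lemma P_zero (q : ℂ) : P q 0 = 1 := by simp [P]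

lemma P_succ (q : ℂ) (n : ℕ) : P q (n + 1) = P q n * (1 + q ^ (n + 1)) :=
  Finset.prod_range_succ _ _

lemma norm_one_add_ge (x : ℂ) : 1 - ‖x‖ ≤ ‖1 + x‖ := by
  have h := norm_sub_le (1 + x) x
  simp only [add_sub_cancel_right, norm_one] at h
  linarith

variable {q : ℂ}

lemma factor_pos (hq : ‖q‖ < 1) (k : ℕ) : (0:ℝ) < 1 - ‖q‖ ^ (k + 1) := by
  have : ‖q‖ ^ (k + 1) < 1 := pow_lt_one₀ (norm_nonneg q) hq (Nat.succ_ne_zero k)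
  linarith

lemma factor_lb (k : ℕ) : 1 - ‖q‖ ^ (k + 1) ≤ ‖1 + q ^ (k + 1)‖ := by
  simpa [norm_pow] using norm_one_add_ge (q ^ (k + 1))

lemma one_add_ne (hq : ‖q‖ < 1) (k : ℕ) : (1 + q ^ (k + 1)) ≠ 0 := by
  intro h
  have h1 := factor_lb (q := q) k
  rw [h] at h1
  simp only [norm_zero] at h1
  have := factor_pos hq (q := q) k
  linarith

/-- exponential lower bound for each factor -/
lemma exp_factor_lb (hq : ‖q‖ < 1) (k : ℕ) :
    Real.exp (-(‖q‖ ^ (k + 1) / (1 - ‖q‖))) ≤ 1 - ‖q‖ ^ (k + 1) := by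
  set y := ‖q‖ ^ (k + 1) with hy
  have hy0 : 0 ≤ y := pow_nonneg (norm_nonneg q) _
  have hyq : y ≤ ‖q‖ := pow_le_of_le_one (norm_nonneg q) hq.le (Nat.succ_ne_zero k)
  have hy1 : y < 1 := lt_of_le_of_lt hyq hq
  have hr1 : (0:ℝ) < 1 - ‖q‖ := by linarith
  have hq1 : (0:ℝ) < 1 - y := by linarith
  have h1 : y / (1 - y) ≤ y / (1 - ‖q‖) :=
    div_le_div_of_nonneg_left hy0 hr1 (by linarith)
  have h2 : (1 - y)⁻¹ ≤ Real.exp (y / (1 - ‖q‖)) := by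
    have h3 : y / (1 - y) + 1 ≤ Real.exp (y / (1 - y)) := Real.add_one_le_exp _
    have h4 : (1 - y)⁻¹ = y / (1 - y) + 1 := by field_simp; ring
    calc (1 - y)⁻¹ = y / (1 - y) + 1 := h4
      _ ≤ Real.exp (y / (1 - y)) := h3
      _ ≤ Real.exp (y / (1 - ‖q‖)) := Real.exp_le_exp.2 h1
  rw [Real.exp_neg]
  exact (inv_le_comm₀ (Real.exp_pos _) hq1).mpr h2

/-- geometric sum bound -/
lemma geom_partial_le (hq : ‖q‖ < 1) (n : ℕ) :
    ∑ k ∈ Finset.range n, ‖q‖ ^ (k + 1) ≤ ‖q‖ / (1 - ‖q‖) := by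
  have hsum : Summable (fun k : ℕ => ‖q‖ ^ k) := summable_geometric_of_lt_one (norm_nonneg q) hq
  have h1 : ∑ k ∈ Finset.range n, ‖q‖ ^ (k + 1) = ‖q‖ * ∑ k ∈ Finset.range n, ‖q‖ ^ k := by
    rw [Finset.mul_sum]; congr 1; funext k; ring
  rw [h1]
  have h2 : ∑ k ∈ Finset.range n, ‖q‖ ^ k ≤ (1 - ‖q‖)⁻¹ := by
    calc ∑ k ∈ Finset.range n, ‖q‖ ^ k ≤ ∑' k : ℕ, ‖q‖ ^ k :=
          Summable.sum_le_tsum _ (fun k _ => pow_nonneg (norm_nonneg q) k) hsum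
      _ = (1 - ‖q‖)⁻¹ := tsum_geometric_of_lt_one (norm_nonneg q) hq
  rw [div_eq_mul_inv]
  exact mul_le_mul_of_nonneg_left h2 (norm_nonneg q)

noncomputable def cLB (q : ℂ) : ℝ := Real.exp (-(‖q‖ / (1 - ‖q‖) / (1 - ‖q‖)))
noncomputable def cUB (q : ℂ) : ℝ := Real.exp (‖q‖ / (1 - ‖q‖))

lemma cLB_pos : (0:ℝ) < cLB q := Real.exp_pos _

lemma norm_P_ge (hq : ‖q‖ < 1) (n : ℕ) : cLB q ≤ ‖P q n‖ := by
  have hr1 : (0:ℝ) < 1 - ‖q‖ := by linarith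
  rw [P, norm_prod]
  calc cLB q = Real.exp (-(‖q‖ / (1 - ‖q‖) / (1 - ‖q‖))) := rfl
    _ ≤ Real.exp (∑ k ∈ Finset.range n, -(‖q‖ ^ (k + 1) / (1 - ‖q‖))) := by
        apply Real.exp_le_exp.2
        have h1 : ∑ k ∈ Finset.range n, -(‖q‖ ^ (k + 1) / (1 - ‖q‖))
            = -((∑ k ∈ Finset.range n, ‖q‖ ^ (k + 1)) / (1 - ‖q‖)) := by
          rw [Finset.sum_div, ← Finset.sum_neg_distrib]
        rw [h1, neg_le_neg_iff]
        exact div_le_div₀ (by positivity) (geom_partial_le hq n) hr1 (le_refl _)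
    _ = ∏ k ∈ Finset.range n, Real.exp (-(‖q‖ ^ (k + 1) / (1 - ‖q‖))) := by
        rw [Real.exp_sum]
    _ ≤ ∏ k ∈ Finset.range n, ‖1 + q ^ (k + 1)‖ := by
        apply Finset.prod_le_prod (fun k _ => (Real.exp_pos _).le)
        intro k _
        exact (exp_factor_lb hq k).trans (factor_lb k)

lemma norm_P_le (hq : ‖q‖ < 1) (n : ℕ) : ‖P q n‖ ≤ cUB q := by
  rw [P, norm_prod]
  calc ∏ k ∈ Finset.range n, ‖1 + q ^ (k + 1)‖
      ≤ ∏ k ∈ Finset.range n, Real.exp (‖q‖ ^ (k + 1)) := by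
        apply Finset.prod_le_prod (fun k _ => norm_nonneg _)
        intro k _
        calc ‖1 + q ^ (k + 1)‖ ≤ ‖(1:ℂ)‖ + ‖q ^ (k + 1)‖ := norm_add_le _ _
          _ = 1 + ‖q‖ ^ (k + 1) := by simp [norm_pow]
          _ ≤ Real.exp (‖q‖ ^ (k + 1)) := by
              have := Real.add_one_le_exp (‖q‖ ^ (k + 1)); linarith
    _ = Real.exp (∑ k ∈ Finset.range n, ‖q‖ ^ (k + 1)) := (Real.exp_sum _ _).symm
    _ ≤ cUB q := Real.exp_le_exp.2 (geom_partial_le hq n)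

lemma P_ne_zero (hq : ‖q‖ < 1) (n : ℕ) : P q n ≠ 0 := by
  intro h
  have h1 := norm_P_ge hq (q := q) n
  rw [h] at h1
  simp only [norm_zero] at h1
  have := cLB_pos (q := q)
  linarith

lemma cUB_pos : (0:ℝ) < cUB q := Real.exp_pos _

end MockF
open Filter Topology

namespace MockF

variable {q : ℂ}

noncomputable def fT (q : ℂ) (n : ℕ) : ℂ := q ^ (n ^ 2) / (P q n) ^ 2

noncomputable def gT (q : ℂ) (m n : ℕ) : ℂ :=
  q ^ (n ^ 2 + (m + 1) * n) * P q m / (P q n * P q (m + n + 1))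

noncomputable def fF (q : ℂ) (m n : ℕ) : ℂ := (-1) ^ n * q ^ ((m + 1) * n) / P q n

noncomputable def bT (q : ℂ) (m : ℕ) : ℕ → ℂ
  | 0 => 2
  | k + 1 => q ^ ((m + 1) * (k + 1) + (k + 1) ^ 2) * P q (m + 1) / (P q k * P q (m + k + 2))

noncomputable def vT (q : ℂ) : ℕ → ℂ
  | 0 => 2
  | n + 1 => q ^ ((n + 1) ^ 2) / (P q (n + 1) * P q n)

/-- master norm bound for `q^a * P q i / (P q j * P q k)` -/
lemma norm_master (hq : ‖q‖ < 1) {a e : ℕ} (h : e ≤ a) (i j k : ℕ) :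
    ‖q ^ a * P q i / (P q j * P q k)‖ ≤ cUB q * ((cLB q)⁻¹) ^ 2 * ‖q‖ ^ e := by
  have hc := cLB_pos (q := q)
  rw [norm_div, norm_mul, norm_mul, norm_pow]
  calc ‖q‖ ^ a * ‖P q i‖ / (‖P q j‖ * ‖P q k‖)
      ≤ ‖q‖ ^ e * cUB q / (cLB q * cLB q) := by
        have hu := cUB_pos (q := q)
        apply div_le_div₀ (mul_nonneg (pow_nonneg (norm_nonneg q) e) hu.le)
          (mul_le_mul (pow_le_pow_of_le_one (norm_nonneg q) hq.le h) (norm_P_le hq i)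
            (norm_nonneg _) (pow_nonneg (norm_nonneg q) e))
          (mul_pos hc hc)
          (mul_le_mul (norm_P_ge hq j) (norm_P_ge hq k) hc.le (norm_nonneg _))
    _ = cUB q * ((cLB q)⁻¹) ^ 2 * ‖q‖ ^ e := by field_simp

lemma norm_fF_master (hq : ‖q‖ < 1) {a e : ℕ} (h : e ≤ a) (n j : ℕ) :
    ‖(-1 : ℂ) ^ n * q ^ a / P q j‖ ≤ (cLB q)⁻¹ * ‖q‖ ^ e := by
  have hc := cLB_pos (q := q)
  rw [norm_div, norm_mul, norm_pow, norm_neg, norm_one, one_pow, one_mul, norm_pow]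
  calc ‖q‖ ^ a / ‖P q j‖ ≤ ‖q‖ ^ e / cLB q :=
        div_le_div₀ (by positivity) (pow_le_pow_of_le_one (norm_nonneg q) hq.le h)
          (by positivity) (norm_P_ge hq j)
    _ = (cLB q)⁻¹ * ‖q‖ ^ e := by ring

lemma summable_norm_geom (hq : ‖q‖ < 1) {C : ℝ} {u : ℕ → ℂ}
    (h : ∀ n, ‖u n‖ ≤ C * ‖q‖ ^ n) : Summable fun n => ‖u n‖ :=
  Summable.of_nonneg_of_le (fun n => norm_nonneg _) h
    ((summable_geometric_of_lt_one (norm_nonneg q) hq).mul_left C)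

lemma summable_geom (hq : ‖q‖ < 1) {C : ℝ} {u : ℕ → ℂ}
    (h : ∀ n, ‖u n‖ ≤ C * ‖q‖ ^ n) : Summable u :=
  (summable_norm_geom hq h).of_norm

lemma tendsto_zero_geom (hq : ‖q‖ < 1) {C : ℝ} {v : ℕ → ℂ}
    (h : ∀ n, ‖v n‖ ≤ C * ‖q‖ ^ n) : Tendsto v atTop (𝓝 0) := by
  apply squeeze_zero_norm h
  have := (tendsto_pow_atTop_nhds_zero_of_lt_one (norm_nonneg q) hq).const_mul C
  simpa using this

lemma tsum_telescope {v w : ℕ → ℂ} (hw : Summable w)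
    (h : ∀ n, w n = v n - v (n + 1)) (hv : Tendsto v atTop (𝓝 0)) :
    ∑' n, w n = v 0 := by
  have h1 := hw.hasSum.tendsto_sum_nat
  have h2 : ∀ N, ∑ n ∈ Finset.range N, w n = v 0 - v N := by
    intro N
    calc ∑ n ∈ Finset.range N, w n = ∑ n ∈ Finset.range N, (v n - v (n + 1)) := by
          exact Finset.sum_congr rfl fun n _ => h n
      _ = v 0 - v N := Finset.sum_range_sub' v N
  have h3 : Tendsto (fun N => ∑ n ∈ Finset.range N, w n) atTop (𝓝 (v 0)) := by
    simp only [h2]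
    simpa using tendsto_const_nhds.sub hv
  exact tendsto_nhds_unique h1 h3

/-- termwise identity (A): `fT n + gT 0 n = vT n - vT (n+1)` -/
lemma identA (hq : ‖q‖ < 1) (n : ℕ) :
    fT q n + gT q 0 n = vT q n - vT q (n + 1) := by
  match n with
  | 0 =>
    have h1 : (1 + q) ≠ 0 := by simpa using one_add_ne hq (q := q) 0
    simp only [fT, gT, vT, P_zero, zero_add, P_succ, pow_zero, pow_one, mul_one, one_mul]
    field_simp
    ring
  | k + 1 =>
    have hk := P_ne_zero hq (q := q) k
    have h1 := one_add_ne hq (q := q) k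
    have h2 : (1 + q ^ (k + 2)) ≠ 0 := by simpa using one_add_ne hq (q := q) (k + 1)
    simp only [fT, gT, vT, P_zero, zero_add, one_mul, mul_one]
    rw [show k + 1 + 1 = k + 2 from rfl, P_succ q (k + 1), P_succ q k]
    set a := q ^ (k + 1) with ha
    set b := q ^ (k + 2) with hb
    set Pk := P q k with hP
    have hA : (Pk * (1 + a)) ^ 2 ≠ 0 := pow_ne_zero _ (mul_ne_zero hk h1)
    have hB : Pk * (1 + a) * (Pk * (1 + a) * (1 + b)) ≠ 0 :=
      mul_ne_zero (mul_ne_zero hk h1) (mul_ne_zero (mul_ne_zero hk h1) h2)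
    have hC : Pk * (1 + a) * Pk ≠ 0 := mul_ne_zero (mul_ne_zero hk h1) hk
    have hD : Pk * (1 + a) * (1 + b) * (Pk * (1 + a)) ≠ 0 :=
      mul_ne_zero (mul_ne_zero (mul_ne_zero hk h1) h2) (mul_ne_zero hk h1)
    rw [div_add_div _ _ hA hB, div_sub_div _ _ hC hD,
      div_eq_div_iff (mul_ne_zero hA hB) (mul_ne_zero hC hD), ha, hb]
    ring

end MockF
namespace MockF

variable {q : ℂ}

/-- termwise identity (B): splitting `1/P n = (1 + q^(n+1))/P (n+1)` -/
lemma identB (hq : ‖q‖ < 1) (m n : ℕ) :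
    (-1 : ℂ) ^ (n + 1) * q ^ ((m + 1) * (n + 1)) / P q n
      = (-1) ^ (n + 1) * q ^ ((m + 1) * (n + 1)) / P q (n + 1)
        + (-1) ^ (n + 1) * q ^ ((m + 2) * (n + 1)) / P q (n + 1) := by
  have hn := P_ne_zero hq (q := q) n
  have h1 := one_add_ne hq (q := q) n
  rw [← add_div, P_succ, div_eq_div_iff hn (mul_ne_zero hn h1)]
  ring

/-- termwise identity (C): the `b`-telescoping -/
lemma identC (hq : ‖q‖ < 1) (m n : ℕ) :
    (1 + q ^ (m + 1)) * gT q m n + gT q (m + 1) n = bT q m n - bT q m (n + 1) := by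
  match n with
  | 0 =>
    simp only [gT, bT, P_zero, mul_zero, add_zero, pow_zero, mul_one, one_mul]
    have hm := P_ne_zero hq (q := q) m
    have hm1 := P_ne_zero hq (q := q) (m + 1)
    have h1 := one_add_ne hq (q := q) m
    have h2 : (1 + q ^ (m + 2)) ≠ 0 := by simpa using one_add_ne hq (q := q) (m + 1)
    rw [show m + 1 + 0 + 1 = m + 2 from by omega, show m + 0 + 1 = m + 1 from by omega,
      show m + 0 + 2 = m + 2 from by omega,
      show (m + 1) * (0 + 1) + (0 + 1) ^ 2 = m + 2 from by ring,
      P_succ q (m + 1), P_succ q m]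
    field_simp
    ring
  | k + 1 =>
    simp only [gT, bT]
    have hk := P_ne_zero hq (q := q) k
    have hmk := P_ne_zero hq (q := q) (m + k + 2)
    have hm := P_ne_zero hq (q := q) m
    have h1 := one_add_ne hq (q := q) k
    have h2 : (1 + q ^ (m + k + 3)) ≠ 0 := by simpa using one_add_ne hq (q := q) (m + k + 2)
    have h3 := one_add_ne hq (q := q) m
    rw [show m + (k + 1) + 1 = m + k + 2 from by omega,
      show m + 1 + (k + 1) + 1 = m + k + 3 from by omega,
      show m + (k + 1) + 2 = m + k + 3 from by omega,
      show m + k + 3 = (m + k + 2) + 1 from by omega,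
      P_succ q (m + k + 2), P_succ q m, P_succ q k]
    rw [show m + k + 2 + 1 = m + k + 3 from by omega]
    set a := q ^ (k + 1) with hha
    set c := q ^ (m + k + 3) with hhc
    set d := q ^ (m + 1) with hhd
    set Pk := P q k with hPk
    set Pm := P q m with hPm
    set Pmk := P q (m + k + 2) with hPmk
    have hA : Pk * (1 + a) * Pmk ≠ 0 := mul_ne_zero (mul_ne_zero hk h1) hmk
    have hB : Pk * (1 + a) * (Pmk * (1 + c)) ≠ 0 :=
      mul_ne_zero (mul_ne_zero hk h1) (mul_ne_zero hmk h2)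
    have hC : Pk * Pmk ≠ 0 := mul_ne_zero hk hmk
    rw [← mul_div_assoc, div_add_div _ _ hA hB, div_sub_div _ _ hC hB, hha, hhc, hhd]
    rw [div_eq_div_iff (mul_ne_zero hA hB) (mul_ne_zero hC hB)]
    ring

end MockF
open Filter Topology

namespace MockF

variable {q : ℂ}

noncomputable def Fs (q : ℂ) (m : ℕ) : ℂ := ∑' n, fF q m n
noncomputable def Gs (q : ℂ) (m : ℕ) : ℂ := ∑' n, gT q m n

lemma nle1 (m n : ℕ) : n ≤ (m + 1) * n := Nat.le_mul_of_pos_left n (Nat.succ_pos m)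
lemma nle2 (m n : ℕ) : n ≤ n ^ 2 + (m + 1) * n := le_trans (nle1 m n) (Nat.le_add_left _ _)

lemma norm_fF_le (hq : ‖q‖ < 1) (m n : ℕ) : ‖fF q m n‖ ≤ (cLB q)⁻¹ * ‖q‖ ^ n :=
  norm_fF_master hq (nle1 m n) n n

lemma summable_fF (hq : ‖q‖ < 1) (m : ℕ) : Summable (fF q m) :=
  summable_geom hq (norm_fF_le hq m)

lemma norm_gT_le (hq : ‖q‖ < 1) (m n : ℕ) :
    ‖gT q m n‖ ≤ cUB q * ((cLB q)⁻¹) ^ 2 * ‖q‖ ^ n :=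
  norm_master hq (nle2 m n) m n (m + n + 1)

lemma summable_gT (hq : ‖q‖ < 1) (m : ℕ) : Summable (gT q m) :=
  summable_geom hq (norm_gT_le hq m)

lemma fT_eq (n : ℕ) : fT q n = q ^ (n ^ 2) * P q 0 / (P q n * P q n) := by
  rw [fT, P_zero, mul_one]; ring

lemma norm_fT_le (hq : ‖q‖ < 1) (n : ℕ) :
    ‖fT q n‖ ≤ cUB q * ((cLB q)⁻¹) ^ 2 * ‖q‖ ^ n := by
  rw [fT_eq]
  exact norm_master hq (Nat.le_self_pow two_ne_zero n) 0 n n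

lemma summable_fT (hq : ‖q‖ < 1) : Summable (fT q) :=
  summable_geom hq (norm_fT_le hq)

lemma tendsto_vT (hq : ‖q‖ < 1) : Tendsto (vT q) atTop (𝓝 0) := by
  rw [← Filter.tendsto_add_atTop_iff_nat 1]
  apply tendsto_zero_geom hq (C := cUB q * ((cLB q)⁻¹) ^ 2 * ‖q‖)
  intro n
  have h1 : vT q (n + 1) = q ^ ((n + 1) ^ 2) * P q 0 / (P q (n + 1) * P q n) := by
    rw [vT, P_zero, mul_one]
  rw [h1]
  calc ‖q ^ ((n + 1) ^ 2) * P q 0 / (P q (n + 1) * P q n)‖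
      ≤ cUB q * ((cLB q)⁻¹) ^ 2 * ‖q‖ ^ (n + 1) :=
        norm_master hq (Nat.le_self_pow two_ne_zero (n + 1)) 0 (n + 1) n
    _ = cUB q * ((cLB q)⁻¹) ^ 2 * ‖q‖ * ‖q‖ ^ n := by ring

lemma tendsto_bT (hq : ‖q‖ < 1) (m : ℕ) : Tendsto (bT q m) atTop (𝓝 0) := by
  rw [← Filter.tendsto_add_atTop_iff_nat 1]
  apply tendsto_zero_geom hq (C := cUB q * ((cLB q)⁻¹) ^ 2 * ‖q‖)
  intro n
  have h1 : bT q m (n + 1)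
      = q ^ ((m + 1) * (n + 1) + (n + 1) ^ 2) * P q (m + 1) / (P q n * P q (m + n + 2)) := rfl
  rw [h1]
  calc ‖q ^ ((m + 1) * (n + 1) + (n + 1) ^ 2) * P q (m + 1) / (P q n * P q (m + n + 2))‖
      ≤ cUB q * ((cLB q)⁻¹) ^ 2 * ‖q‖ ^ (n + 1) := by
        apply norm_master hq _ (m + 1) n (m + n + 2)
        calc n + 1 ≤ (m + 1) * (n + 1) := nle1 m (n + 1)
          _ ≤ (m + 1) * (n + 1) + (n + 1) ^ 2 := Nat.le_add_right _ _
    _ = cUB q * ((cLB q)⁻¹) ^ 2 * ‖q‖ * ‖q‖ ^ n := by ring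

/-- series identity (A): `f + G_0 = 2` -/
lemma eqA (hq : ‖q‖ < 1) : (∑' n, fT q n) + Gs q 0 = 2 := by
  rw [Gs, ← Summable.tsum_add (summable_fT hq) (summable_gT hq 0)]
  have h := tsum_telescope ((summable_fT hq).add (summable_gT hq 0)) (identA hq) (tendsto_vT hq)
  rw [h]; rfl

/-- series identity (B): `(1+q^(m+1)) F_m = 2 - F_(m+1)` -/
lemma eqB (hq : ‖q‖ < 1) (m : ℕ) : (1 + q ^ (m + 1)) * Fs q m = 2 - Fs q (m + 1) := by
  have sm := summable_fF hq m
  have sm1 := summable_fF hq (m + 1)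
  have sm' : Summable (fun n => fF q m (n + 1)) := (summable_nat_add_iff 1).mpr sm
  have sm1' : Summable (fun n => fF q (m + 1) (n + 1)) := (summable_nat_add_iff 1).mpr sm1
  have e1 : Fs q m = 1 + ∑' n, fF q m (n + 1) := by
    rw [Fs, Summable.tsum_eq_zero_add sm]
    congr 1
    simp [fF, P_zero]
  have e2 : Fs q (m + 1) = 1 + ∑' n, fF q (m + 1) (n + 1) := by
    rw [Fs, Summable.tsum_eq_zero_add sm1]
    congr 1
    simp [fF, P_zero]
  have e3 : ∑' n, ((-1 : ℂ) ^ (n + 1) * q ^ ((m + 1) * (n + 1)) / P q n)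
      = -q ^ (m + 1) * Fs q m := by
    rw [Fs, ← tsum_mul_left]
    apply tsum_congr
    intro n
    rw [fF]
    ring
  have e4 : ∀ n : ℕ, (-1 : ℂ) ^ (n + 1) * q ^ ((m + 1) * (n + 1)) / P q n
      = fF q m (n + 1) + fF q (m + 1) (n + 1) := by
    intro n
    simp only [fF]
    rw [show m + 1 + 1 = m + 2 from rfl]
    exact identB hq m n
  have e5 : -q ^ (m + 1) * Fs q m
      = (∑' n, fF q m (n + 1)) + ∑' n, fF q (m + 1) (n + 1) := by
    rw [← e3, tsum_congr e4, Summable.tsum_add sm' sm1']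
  have e6 : ∑' n, fF q m (n + 1) = Fs q m - 1 := by rw [e1]; ring
  have e7 : ∑' n, fF q (m + 1) (n + 1) = Fs q (m + 1) - 1 := by rw [e2]; ring
  rw [e6, e7] at e5
  linear_combination -e5

/-- series identity (C): `(1+q^(m+1)) G_m + G_(m+1) = 2` -/
lemma eqC (hq : ‖q‖ < 1) (m : ℕ) : (1 + q ^ (m + 1)) * Gs q m + Gs q (m + 1) = 2 := by
  have s1 : Summable (fun n => (1 + q ^ (m + 1)) * gT q m n) := (summable_gT hq m).mul_left _
  have h1 : (1 + q ^ (m + 1)) * Gs q m = ∑' n, (1 + q ^ (m + 1)) * gT q m n := by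
    rw [Gs, tsum_mul_left]
  rw [h1, Gs, ← Summable.tsum_add s1 (summable_gT hq (m + 1))]
  exact tsum_telescope (s1.add (summable_gT hq (m + 1))) (identC hq m) (tendsto_bT hq m)

end MockF
open Filter Topology

namespace MockF

variable {q : ℂ}

lemma Fs_shift (hq : ‖q‖ < 1) (m : ℕ) : Fs q m = 1 + ∑' n, fF q m (n + 1) := by
  rw [Fs, Summable.tsum_eq_zero_add (summable_fF hq m)]
  congr 1
  simp [fF, P_zero]

lemma exp_ineq1 (m n : ℕ) : m + 1 + n ≤ (m + 1) * (n + 1) := by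
  have h := nle1 m n
  calc m + 1 + n ≤ m + 1 + (m + 1) * n := by omega
    _ = (m + 1) * (n + 1) := by ring

lemma norm_fF_shift (hq : ‖q‖ < 1) (m n : ℕ) :
    ‖fF q m (n + 1)‖ ≤ (cLB q)⁻¹ * ‖q‖ ^ (m + 1) * ‖q‖ ^ n := by
  calc ‖fF q m (n + 1)‖ ≤ (cLB q)⁻¹ * ‖q‖ ^ (m + 1 + n) :=
        norm_fF_master hq (exp_ineq1 m n) (n + 1) (n + 1)
    _ = (cLB q)⁻¹ * ‖q‖ ^ (m + 1) * ‖q‖ ^ n := by rw [pow_add]; ring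

lemma hF1 (hq : ‖q‖ < 1) (m : ℕ) :
    ‖Fs q m - 1‖ ≤ (cLB q)⁻¹ * (1 - ‖q‖)⁻¹ * ‖q‖ ^ (m + 1) := by
  have hr1 : (0:ℝ) < 1 - ‖q‖ := by linarith
  have e1 : Fs q m - 1 = ∑' n, fF q m (n + 1) := by rw [Fs_shift hq m]; ring
  have hsn : Summable fun n => ‖fF q m (n + 1)‖ :=
    summable_norm_geom hq (norm_fF_shift hq m)
  have hsg : Summable fun n : ℕ => (cLB q)⁻¹ * ‖q‖ ^ (m + 1) * ‖q‖ ^ n :=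
    (summable_geometric_of_lt_one (norm_nonneg q) hq).mul_left _
  rw [e1]
  calc ‖∑' n, fF q m (n + 1)‖ ≤ ∑' n, ‖fF q m (n + 1)‖ := norm_tsum_le_tsum_norm hsn
    _ ≤ ∑' n : ℕ, (cLB q)⁻¹ * ‖q‖ ^ (m + 1) * ‖q‖ ^ n :=
        Summable.tsum_le_tsum (norm_fF_shift hq m) hsn hsg
    _ = (cLB q)⁻¹ * ‖q‖ ^ (m + 1) * (1 - ‖q‖)⁻¹ := by
        rw [tsum_mul_left, tsum_geometric_of_lt_one (norm_nonneg q) hq]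
    _ = (cLB q)⁻¹ * (1 - ‖q‖)⁻¹ * ‖q‖ ^ (m + 1) := by ring

lemma gT_zero (hq : ‖q‖ < 1) (m : ℕ) : gT q m 0 = (1 + q ^ (m + 1))⁻¹ := by
  have hm := P_ne_zero hq (q := q) m
  have h1 := one_add_ne hq (q := q) m
  simp only [gT, pow_zero, mul_zero, add_zero, P_zero, one_mul]
  rw [show m + 0 + 1 = m + 1 from by omega, P_succ]
  field_simp
  simp

lemma exp_ineq2 (m n : ℕ) : m + 1 + n ≤ (n + 1) ^ 2 + (m + 1) * (n + 1) := by
  have h := exp_ineq1 m n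
  omega

lemma norm_gT_shift (hq : ‖q‖ < 1) (m n : ℕ) :
    ‖gT q m (n + 1)‖ ≤ cUB q * ((cLB q)⁻¹) ^ 2 * ‖q‖ ^ (m + 1) * ‖q‖ ^ n := by
  calc ‖gT q m (n + 1)‖ ≤ cUB q * ((cLB q)⁻¹) ^ 2 * ‖q‖ ^ (m + 1 + n) :=
        norm_master hq (exp_ineq2 m n) m (n + 1) (m + (n + 1) + 1)
    _ = cUB q * ((cLB q)⁻¹) ^ 2 * ‖q‖ ^ (m + 1) * ‖q‖ ^ n := by rw [pow_add]; ring

lemma hG1 (hq : ‖q‖ < 1) (m : ℕ) :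
    ‖Gs q m - 1‖ ≤ ((1 - ‖q‖)⁻¹ + cUB q * ((cLB q)⁻¹) ^ 2 * (1 - ‖q‖)⁻¹) * ‖q‖ ^ (m + 1) := by
  have hr1 : (0:ℝ) < 1 - ‖q‖ := by linarith
  have h1 := one_add_ne hq (q := q) m
  have e1 : Gs q m = gT q m 0 + ∑' n, gT q m (n + 1) := by
    rw [Gs, Summable.tsum_eq_zero_add (summable_gT hq m)]
  have e2 : Gs q m - 1 = (gT q m 0 - 1) + ∑' n, gT q m (n + 1) := by rw [e1]; ring
  have hsn : Summable fun n => ‖gT q m (n + 1)‖ :=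
    summable_norm_geom hq (norm_gT_shift hq m)
  have hsg : Summable fun n : ℕ => cUB q * ((cLB q)⁻¹) ^ 2 * ‖q‖ ^ (m + 1) * ‖q‖ ^ n :=
    (summable_geometric_of_lt_one (norm_nonneg q) hq).mul_left _
  have hb1 : ‖gT q m 0 - 1‖ ≤ (1 - ‖q‖)⁻¹ * ‖q‖ ^ (m + 1) := by
    have e3 : gT q m 0 - 1 = -(q ^ (m + 1)) * (1 + q ^ (m + 1))⁻¹ := by
      rw [gT_zero hq m]
      field_simp
      ring
    rw [e3, norm_mul, norm_neg, norm_pow, norm_inv]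
    have h4 : 1 - ‖q‖ ≤ ‖1 + q ^ (m + 1)‖ := by
      have h5 := factor_lb (q := q) m
      have h6 : ‖q‖ ^ (m + 1) ≤ ‖q‖ := pow_le_of_le_one (norm_nonneg q) hq.le (Nat.succ_ne_zero m)
      linarith
    have h7 : (0:ℝ) < ‖1 + q ^ (m + 1)‖ := lt_of_lt_of_le hr1 h4
    calc ‖q‖ ^ (m + 1) * ‖1 + q ^ (m + 1)‖⁻¹ ≤ ‖q‖ ^ (m + 1) * (1 - ‖q‖)⁻¹ := by
          apply mul_le_mul_of_nonneg_left _ (pow_nonneg (norm_nonneg q) _)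
          exact inv_anti₀ hr1 h4
      _ = (1 - ‖q‖)⁻¹ * ‖q‖ ^ (m + 1) := by ring
  have hb2 : ‖∑' n, gT q m (n + 1)‖
      ≤ cUB q * ((cLB q)⁻¹) ^ 2 * (1 - ‖q‖)⁻¹ * ‖q‖ ^ (m + 1) := by
    calc ‖∑' n, gT q m (n + 1)‖ ≤ ∑' n, ‖gT q m (n + 1)‖ := norm_tsum_le_tsum_norm hsn
      _ ≤ ∑' n : ℕ, cUB q * ((cLB q)⁻¹) ^ 2 * ‖q‖ ^ (m + 1) * ‖q‖ ^ n :=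
          Summable.tsum_le_tsum (norm_gT_shift hq m) hsn hsg
      _ = cUB q * ((cLB q)⁻¹) ^ 2 * ‖q‖ ^ (m + 1) * (1 - ‖q‖)⁻¹ := by
          rw [tsum_mul_left, tsum_geometric_of_lt_one (norm_nonneg q) hq]
      _ = cUB q * ((cLB q)⁻¹) ^ 2 * (1 - ‖q‖)⁻¹ * ‖q‖ ^ (m + 1) := by ring
  calc ‖Gs q m - 1‖ ≤ ‖gT q m 0 - 1‖ + ‖∑' n, gT q m (n + 1)‖ := by
        rw [e2]; exact norm_add_le _ _
    _ ≤ (1 - ‖q‖)⁻¹ * ‖q‖ ^ (m + 1)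
        + cUB q * ((cLB q)⁻¹) ^ 2 * (1 - ‖q‖)⁻¹ * ‖q‖ ^ (m + 1) := add_le_add hb1 hb2
    _ = ((1 - ‖q‖)⁻¹ + cUB q * ((cLB q)⁻¹) ^ 2 * (1 - ‖q‖)⁻¹) * ‖q‖ ^ (m + 1) := by ring

lemma dd_eq (hq : ‖q‖ < 1) (m : ℕ) :
    Fs q m - Gs q m = (-1) ^ m * P q m * (Fs q 0 - Gs q 0) := by
  induction m with
  | zero => simp [P_zero]
  | succ m ih =>
    rw [pow_succ, P_succ]
    linear_combination (eqB hq m) - (eqC hq m) - (1 + q ^ (m + 1)) * ih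

lemma FG0 (hq : ‖q‖ < 1) : Fs q 0 = Gs q 0 := by
  set K : ℝ := (cLB q)⁻¹ * (1 - ‖q‖)⁻¹
    + ((1 - ‖q‖)⁻¹ + cUB q * ((cLB q)⁻¹) ^ 2 * (1 - ‖q‖)⁻¹) with hK
  have key : ∀ m : ℕ, ‖Fs q 0 - Gs q 0‖ * cLB q ≤ K * ‖q‖ ^ (m + 1) := by
    intro m
    calc ‖Fs q 0 - Gs q 0‖ * cLB q ≤ ‖Fs q 0 - Gs q 0‖ * ‖P q m‖ :=
          mul_le_mul_of_nonneg_left (norm_P_ge hq m) (norm_nonneg _)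
      _ = ‖Fs q m - Gs q m‖ := by
          rw [dd_eq hq m, norm_mul, norm_mul, norm_pow, norm_neg, norm_one, one_pow, one_mul]
          ring
      _ ≤ ‖Fs q m - 1‖ + ‖Gs q m - 1‖ := by
          have h : Fs q m - Gs q m = (Fs q m - 1) - (Gs q m - 1) := by ring
          rw [h]; exact norm_sub_le _ _
      _ ≤ K * ‖q‖ ^ (m + 1) := by
          rw [hK, add_mul]
          exact add_le_add (hF1 hq m) (hG1 hq m)
  have lim : Tendsto (fun m : ℕ => K * ‖q‖ ^ (m + 1)) atTop (𝓝 0) := by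
    have h1 : Tendsto (fun m : ℕ => K * ‖q‖ ^ m) atTop (𝓝 0) := by
      have := (tendsto_pow_atTop_nhds_zero_of_lt_one (norm_nonneg q) hq).const_mul K
      simpa using this
    exact (tendsto_add_atTop_iff_nat 1).mpr h1
  have h0 : ‖Fs q 0 - Gs q 0‖ * cLB q ≤ 0 := ge_of_tendsto' lim key
  have h1 : ‖Fs q 0 - Gs q 0‖ = 0 := by
    nlinarith [cLB_pos (q := q), norm_nonneg (Fs q 0 - Gs q 0)]
  exact sub_eq_zero.mp (norm_eq_zero.mp h1)

end MockF

set_option maxHeartbeats 1000000 in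
/-- two `q`-hypergeometric expressions for Ramanujan's order-three
mock theta function `f(q)`:
`Σ_{n≥0} q^{n²}/(−q;q)_n² = 1 − Σ_{n≥1} (−1)ⁿ qⁿ/(−q;q)_n`. -/
theorem mock_f_two_expressions (q : ℂ) (hq : ‖q‖ < 1) :
    (Summable fun n : ℕ =>
      ‖q ^ (n ^ 2) / (∏ k ∈ Finset.range n, (1 + q ^ (k + 1))) ^ 2‖) ∧
    (Summable fun n : ℕ =>
      ‖(-1 : ℂ) ^ (n + 1) * q ^ (n + 1) /
        ∏ k ∈ Finset.range (n + 1), (1 + q ^ (k + 1))‖) ∧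
    ∑' n : ℕ, q ^ (n ^ 2) / (∏ k ∈ Finset.range n, (1 + q ^ (k + 1))) ^ 2 =
      1 - ∑' n : ℕ, (-1 : ℂ) ^ (n + 1) * q ^ (n + 1) /
        ∏ k ∈ Finset.range (n + 1), (1 + q ^ (k + 1)) := by
  have efT : ∀ n : ℕ, q ^ (n ^ 2) / (∏ k ∈ Finset.range n, (1 + q ^ (k + 1))) ^ 2
      = MockF.fT q n := by
    intro n
    simp only [MockF.fT, MockF.P]
  have efF : ∀ n : ℕ, (-1 : ℂ) ^ (n + 1) * q ^ (n + 1) /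
      ∏ k ∈ Finset.range (n + 1), (1 + q ^ (k + 1)) = MockF.fF q 0 (n + 1) := by
    intro n
    simp [MockF.fF, MockF.P]
  refine ⟨?_, ?_, ?_⟩
  · have hs : Summable fun n : ℕ => ‖MockF.fT q n‖ :=
      MockF.summable_norm_geom hq (MockF.norm_fT_le hq)
    exact hs.congr fun n => (congrArg norm (efT n)).symm
  · have hs : Summable fun n : ℕ => ‖MockF.fF q 0 (n + 1)‖ :=
      (summable_nat_add_iff 1).mpr (MockF.summable_norm_geom hq (MockF.norm_fF_le hq 0))
    exact hs.congr fun n => (congrArg norm (efF n)).symm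
  · have hA := MockF.eqA (q := q) hq
    have h0 := MockF.FG0 (q := q) hq
    have hFs := MockF.Fs_shift (q := q) hq 0
    have hT : ∑' n : ℕ, (-1 : ℂ) ^ (n + 1) * q ^ (n + 1) /
        ∏ k ∈ Finset.range (n + 1), (1 + q ^ (k + 1)) = ∑' n, MockF.fF q 0 (n + 1) :=
      tsum_congr efF
    have hL : ∑' n : ℕ, q ^ (n ^ 2) / (∏ k ∈ Finset.range n, (1 + q ^ (k + 1))) ^ 2
        = ∑' n, MockF.fT q n := tsum_congr efT
    rw [hL, hT]
    have : (∑' n, MockF.fT q n) + MockF.Fs q 0 = 2 := by rw [h0]; exact hA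
    linear_combination this - hFs
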